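/- For every x ∈ M^n and every y ∈ M^n ∖ {x}, ∑_{j=1}^n ∂̄_{y_j} K_j(y − x) = 0 and ∑_{j=1}^n K_j(y − x) ∂̄_{y_j} = 0, where ∂̄_{y_j} applied on the left means ∑_{s=0}^m v_s ∂/∂y_{j,s} acting by left multiplication and applied on the right means ∑_{s=0}^m (∂/∂y_{j,s}) acting with right multiplication by v_s. -/

import Mathlib

open MeasureTheory

noncomputable section

/-- A real alternative `*`-algebra of finite dimension `> 1`, with a fixed
hypercomplex basis `v 0 = 1, v 1, …, v m` spanning the hypercomplex subspace `M`.
Multiplication is `ℝ`-bilinear (bundled as a linear map). -/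
structure HCAlg (𝔸 : Type) [NormedAddCommGroup 𝔸] [NormedSpace ℝ 𝔸] (m : ℕ) : Type where
  mul : 𝔸 →ₗ[ℝ] 𝔸 →ₗ[ℝ] 𝔸
  one : 𝔸
  conj : 𝔸 →ₗ[ℝ] 𝔸
  findim : FiniteDimensional ℝ 𝔸
  dim_gt_one : 1 < Module.finrank ℝ 𝔸
  one_mul' : ∀ a, mul one a = a
  mul_one' : ∀ a, mul a one = a
  alt_left : ∀ a b, mul a (mul a b) = mul (mul a a) b
  alt_right : ∀ a b, mul (mul b a) a = mul b (mul a a)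
  conj_invol : ∀ a, conj (conj a) = a
  conj_mul' : ∀ a b, conj (mul a b) = mul (conj b) (conj a)
  conj_one : conj one = one
  hm : 1 ≤ m
  v : Fin (m + 1) → 𝔸
  v_indep : LinearIndependent ℝ v
  v_zero : v 0 = one
  v_trace : ∀ s, s ≠ 0 → v s + conj (v s) = 0
  v_norm : ∀ s, s ≠ 0 → mul (v s) (conj (v s)) = one
  v_anticomm : ∀ s t, s ≠ 0 → t ≠ 0 → s ≠ t → mul (v s) (v t) = -(mul (v t) (v s))

variable {𝔸 : Type} [NormedAddCommGroup 𝔸] [NormedSpace ℝ 𝔸] {m n : ℕ}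

/-- `M^n`, identified with `ℝ^{(m+1)n}` via the coordinates `x j s`. -/
abbrev Mn (n m : ℕ) := Fin n → Fin (m + 1) → ℝ

/-- Euclidean norm of a point of `M` (in coordinates). -/
def enormM (c : Fin (m + 1) → ℝ) : ℝ := Real.sqrt (∑ s, c s ^ 2)

/-- Euclidean norm of a point of `M^n` (in coordinates). -/
def enormMn (x : Mn n m) : ℝ := Real.sqrt (∑ j, ∑ s, x j s ^ 2)

/-- Partial derivative `∂f/∂x_{j,s}` for functions on `M^n`. -/
def pd {E : Type} [NormedAddCommGroup E] [NormedSpace ℝ E]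
    (f : Mn n m → E) (j : Fin n) (s : Fin (m + 1)) (x : Mn n m) : E :=
  fderiv ℝ f x (Pi.single j (Pi.single s 1))

/-- Partial derivative `∂f/∂x_s` for functions on `M`. -/
def pd1 {E : Type} [NormedAddCommGroup E] [NormedSpace ℝ E]
    (f : (Fin (m + 1) → ℝ) → E) (s : Fin (m + 1)) (x : Fin (m + 1) → ℝ) : E :=
  fderiv ℝ f x (Pi.single s 1)

/-- The Dirac (Cauchy–Riemann) operator `∂̄_j = ∑_s v_s ∂/∂x_{j,s}`. -/
def dbar (H : HCAlg 𝔸 m) (f : Mn n m → 𝔸) (j : Fin n) (x : Mn n m) : 𝔸 :=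
  ∑ s, H.mul (H.v s) (pd f j s x)

/-- The conjugated Dirac operator `∂_j = ∑_s v_s^c ∂/∂x_{j,s}`. -/
def dconj (H : HCAlg 𝔸 m) (f : Mn n m → 𝔸) (j : Fin n) (x : Mn n m) : 𝔸 :=
  ∑ s, H.mul (H.conj (H.v s)) (pd f j s x)

/-- The Laplacian `Δ_j = ∑_s ∂²/∂x_{j,s}²` in the `j`-th block of variables. -/
def lap {E : Type} [NormedAddCommGroup E] [NormedSpace ℝ E]
    (f : Mn n m → E) (j : Fin n) (x : Mn n m) : E :=
  ∑ s, pd (pd f j s) j s x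

/-- Surface area of the unit `(N-1)`-sphere in `ℝ^N`: `σ_N = 2 π^{N/2} / Γ(N/2)`. -/
def usigma (N : ℕ) : ℝ := 2 * Real.pi ^ ((N : ℝ) / 2) / Real.Gamma ((N : ℝ) / 2)

/-- Embedding of coordinates into the hypercomplex subspace `M ⊆ 𝔸`. -/
def embM (H : HCAlg 𝔸 m) (c : Fin (m + 1) → ℝ) : 𝔸 := ∑ s, c s • H.v s

/-- The Cauchy kernel `E(x) = σ_{m+1}⁻¹ x^c / |x|^{m+1}` on `M`. -/
def CauchyE (H : HCAlg 𝔸 m) (c : Fin (m + 1) → ℝ) : 𝔸 :=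
  (usigma (m + 1) * enormM c ^ (m + 1))⁻¹ • H.conj (embM H c)

/-- The Bochner–Martinelli kernel components `K_j(x) = σ_N⁻¹ x_j^c / |x|^N`, `N = (m+1)n`. -/
def Kker (H : HCAlg 𝔸 m) (n : ℕ) (j : Fin n) (x : Mn n m) : 𝔸 :=
  (usigma ((m + 1) * n) * enormMn x ^ ((m + 1) * n))⁻¹ • H.conj (embM H (x j))

/-- `Tsol g (x) = −∫_M E(y₁ − x₁) (g(y₁, x⁰)) dV(y₁)`. -/
def Tsol (H : HCAlg 𝔸 m) (hn : 0 < n) (g : Mn n m → 𝔸) (x : Mn n m) : 𝔸 :=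
  - ∫ y1 : Fin (m + 1) → ℝ,
      H.mul (CauchyE H (y1 - x ⟨0, hn⟩)) (g (Function.update x ⟨0, hn⟩ y1))

/-- `Fint g (x) = ∫_M E(y₁) (g(y₁ + x₁, x⁰)) dV(y₁)`. -/
def Fint (H : HCAlg 𝔸 m) (hn : 0 < n) (g : Mn n m → 𝔸) (x : Mn n m) : 𝔸 :=
  ∫ y1 : Fin (m + 1) → ℝ,
      H.mul (CauchyE H y1) (g (Function.update x ⟨0, hn⟩ (y1 + x ⟨0, hn⟩)))


section AlgAux

variable (H : HCAlg 𝔸 m)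

lemma aux_conj_v {s : Fin (m+1)} (hs : s ≠ 0) : H.conj (H.v s) = -H.v s :=
  eq_neg_of_add_eq_zero_right (H.v_trace s hs)

lemma aux_mul_v_conj (s : Fin (m+1)) : H.mul (H.v s) (H.conj (H.v s)) = H.one := by
  rcases eq_or_ne s 0 with h | h
  · subst h; rw [H.v_zero, H.conj_one, H.one_mul']
  · exact H.v_norm s h

lemma aux_mul_vv {s : Fin (m+1)} (hs : s ≠ 0) : H.mul (H.v s) (H.v s) = -H.one := by
  have h := H.v_norm s hs
  rw [aux_conj_v H hs, map_neg] at h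
  exact neg_eq_iff_eq_neg.mp h

lemma aux_mul_conj_v (s : Fin (m+1)) : H.mul (H.conj (H.v s)) (H.v s) = H.one := by
  rcases eq_or_ne s 0 with h | h
  · subst h; rw [H.v_zero, H.conj_one, H.one_mul']
  · rw [aux_conj_v H h, map_neg, LinearMap.neg_apply, aux_mul_vv H h, neg_neg]

lemma aux_pairL (s t : Fin (m+1)) :
    H.mul (H.v s) (H.conj (H.v t)) + H.mul (H.v t) (H.conj (H.v s))
      = if s = t then H.one + H.one else 0 := by
  rcases eq_or_ne s t with rfl | hst
  · rw [if_pos rfl, aux_mul_v_conj]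
  · rw [if_neg hst]
    rcases eq_or_ne s 0 with rfl | hs
    · have ht : t ≠ 0 := fun h => hst h.symm
      rw [H.v_zero, H.conj_one, H.one_mul', H.mul_one', add_comm]
      exact H.v_trace t ht
    · rcases eq_or_ne t 0 with rfl | ht
      · rw [H.v_zero, H.conj_one, H.one_mul', H.mul_one']
        exact H.v_trace s hs
      · rw [aux_conj_v H hs, aux_conj_v H ht, map_neg, map_neg,
          H.v_anticomm s t hs ht hst]
        abel

lemma aux_pairR (s t : Fin (m+1)) :
    H.mul (H.conj (H.v s)) (H.v t) + H.mul (H.conj (H.v t)) (H.v s)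
      = if s = t then H.one + H.one else 0 := by
  rcases eq_or_ne s t with rfl | hst
  · rw [if_pos rfl, aux_mul_conj_v]
  · rw [if_neg hst]
    rcases eq_or_ne s 0 with rfl | hs
    · have ht : t ≠ 0 := fun h => hst h.symm
      rw [H.v_zero, H.conj_one, H.one_mul', H.mul_one']
      exact H.v_trace t ht
    · rcases eq_or_ne t 0 with rfl | ht
      · rw [H.v_zero, H.conj_one, H.one_mul', H.mul_one', add_comm]
        exact H.v_trace s hs
      · rw [aux_conj_v H hs, aux_conj_v H ht, map_neg, map_neg,
          LinearMap.neg_apply, LinearMap.neg_apply,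
          H.v_anticomm s t hs ht hst]
        abel

lemma aux_expand (a b : Fin (m+1) → ℝ) (w : Fin (m+1) → 𝔸) (u : Fin (m+1) → 𝔸) :
    H.mul (∑ s, a s • w s) (∑ t, b t • u t)
      = ∑ s, ∑ t, (a s * b t) • H.mul (w s) (u t) := by
  simp only [map_sum, LinearMap.map_smul, LinearMap.sum_apply, LinearMap.smul_apply,
    Finset.smul_sum, smul_smul]
  exact Finset.sum_comm

lemma aux_cancel {T c : 𝔸} (h : T + T = c + c) : T = c := by
  have h2 : (2:ℝ) • T = (2:ℝ) • c := by rw [two_smul, two_smul]; exact h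
  exact smul_right_injective 𝔸 (two_ne_zero) h2

lemma aux_double {a : Fin (m+1) → ℝ} {f : Fin (m+1) → Fin (m+1) → 𝔸}
    (hf : ∀ s t, f s t + f t s = if s = t then H.one + H.one else 0) :
    (∑ s, ∑ t, (a s * a t) • f s t) = (∑ s, a s ^ 2) • H.one := by
  refine aux_cancel ?_
  have hswap : (∑ s, ∑ t, (a s * a t) • f s t) = ∑ s, ∑ t, (a t * a s) • f t s :=
    Finset.sum_comm
  calc (∑ s, ∑ t, (a s * a t) • f s t) + (∑ s, ∑ t, (a s * a t) • f s t)
      = (∑ s, ∑ t, (a s * a t) • f s t) + ∑ s, ∑ t, (a t * a s) • f t s := by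
        rw [← hswap]
    _ = ∑ s, ∑ t, ((a s * a t) • f s t + (a t * a s) • f t s) := by
        rw [← Finset.sum_add_distrib]
        refine Finset.sum_congr rfl fun s _ => ?_
        rw [← Finset.sum_add_distrib]
    _ = ∑ s, ∑ t, (a s * a t) • (f s t + f t s) := by
        refine Finset.sum_congr rfl fun s _ => Finset.sum_congr rfl fun t _ => ?_
        rw [smul_add, mul_comm (a t) (a s)]
    _ = ∑ s, (a s ^ 2) • (H.one + H.one) := by
        refine Finset.sum_congr rfl fun s _ => ?_
        rw [Finset.sum_eq_single s]
        · rw [hf s s, if_pos rfl, sq]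
        · intro t _ hts
          rw [hf s t, if_neg (fun h => hts h.symm), smul_zero]
        · intro h; exact absurd (Finset.mem_univ s) h
    _ = (∑ s, a s ^ 2) • H.one + (∑ s, a s ^ 2) • H.one := by
        rw [← Finset.sum_smul, smul_add]

lemma aux_normA2 (a : Fin (m+1) → ℝ) :
    H.mul (∑ s, a s • H.v s) (∑ t, a t • H.conj (H.v t)) = (∑ s, a s ^ 2) • H.one := by
  rw [aux_expand]
  exact aux_double H (aux_pairL H)

lemma aux_normA2' (a : Fin (m+1) → ℝ) :
    H.mul (∑ s, a s • H.conj (H.v s)) (∑ t, a t • H.v t) = (∑ s, a s ^ 2) • H.one := by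
  rw [aux_expand]
  exact aux_double H (aux_pairR H)

lemma aux_comb_right (f : 𝔸 →ₗ[ℝ] 𝔸) {k : ℕ} (c : Fin k → ℝ) (u : Fin k → 𝔸) :
    f (∑ s, c s • u s) = ∑ s, c s • f (u s) := by
  rw [map_sum]
  exact Finset.sum_congr rfl fun s _ => f.map_smul _ _

lemma aux_comb_left {k : ℕ} (c : Fin k → ℝ) (u : Fin k → 𝔸) (b : 𝔸) :
    H.mul (∑ s, c s • u s) b = ∑ s, c s • H.mul (u s) b := by
  rw [map_sum, LinearMap.sum_apply]
  exact Finset.sum_congr rfl fun s _ => by rw [LinearMap.map_smul, LinearMap.smul_apply]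

end AlgAux

section AnaAux

variable (H : HCAlg 𝔸 m)

/-- coordinate projection as a continuous linear map -/
def Ecoord (j : Fin n) (s : Fin (m+1)) : Mn n m →L[ℝ] ℝ :=
  (ContinuousLinearMap.proj s).comp (ContinuousLinearMap.proj (R := ℝ) (φ := fun _ : Fin n => (Fin (m+1) → ℝ)) j)

lemma pd_Kker (x y : Mn n m) (hS : 0 < ∑ j', ∑ t, (y j' t - x j' t)^2)
    (j : Fin n) (s : Fin (m+1)) :
    pd (fun z => Kker H n j (z - x)) j s y =
      ((usigma ((m+1)*n))⁻¹ * (∑ j', ∑ t, (y j' t - x j' t)^2) ^ (-((((m+1)*n : ℕ)) : ℝ)/2)) • H.conj (H.v s)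
      + ((usigma ((m+1)*n))⁻¹ * (-((((m+1)*n : ℕ)) : ℝ)) * (∑ j', ∑ t, (y j' t - x j' t)^2) ^ (-((((m+1)*n : ℕ)) : ℝ)/2 - 1) * (y j s - x j s)) •
          (∑ t, (y j t - x j t) • H.conj (H.v t)) := by
  set N : ℕ := (m+1)*n with hN
  set Nr : ℝ := ((N : ℕ) : ℝ) with hNr
  set S : Mn n m → ℝ := fun z => ∑ j', ∑ t, (z j' t - x j' t)^2 with hSdef
  have hSy : 0 < S y := hS
  have hcoord : ∀ (j' : Fin n) (t : Fin (m+1)),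
      HasFDerivAt (fun z : Mn n m => z j' t - x j' t) (Ecoord j' t) y :=
    fun j' t => ((Ecoord j' t).hasFDerivAt).sub_const _
  set S' : Mn n m →L[ℝ] ℝ := ∑ j', ∑ t, (2 * (y j' t - x j' t)) • Ecoord j' t with hS'
  have hSd : HasFDerivAt S S' y := by
    refine HasFDerivAt.fun_sum fun j' _ => HasFDerivAt.fun_sum fun t _ => ?_
    have := (hasDerivAt_pow 2 (y j' t - x j' t)).comp_hasFDerivAt y (hcoord j' t)
    simpa [Function.comp_def] using this
  set φ : Mn n m → ℝ := fun z => (usigma N)⁻¹ * S z ^ (-Nr/2) with hφ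
  set ψ : Mn n m → 𝔸 := fun z => ∑ t, (z j t - x j t) • H.conj (H.v t) with hψ
  set ψ' : Mn n m →L[ℝ] 𝔸 := ∑ t, (Ecoord j t).smulRight (H.conj (H.v t)) with hψ'
  have hψd : HasFDerivAt ψ ψ' y :=
    HasFDerivAt.fun_sum fun t _ => (hcoord j t).smul_const _
  set φ' : Mn n m →L[ℝ] ℝ :=
    ((usigma N)⁻¹ * ((-Nr/2) * S y ^ (-Nr/2 - 1))) • S' with hφ'
  have hφd : HasFDerivAt φ φ' y := by
    have h1 := (Real.hasDerivAt_rpow_const (x := S y) (p := -Nr/2)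
      (Or.inl hSy.ne')).comp_hasFDerivAt y hSd
    have h2 := h1.const_mul ((usigma N)⁻¹)
    simpa [Function.comp, smul_smul, hφ'] using h2
  have hgd : HasFDerivAt (fun z => φ z • ψ z) (φ y • ψ' + φ'.smulRight (ψ y)) y :=
    hφd.smul hψd
  have hScont : Continuous S := by
    refine continuous_finset_sum _ fun j' _ => continuous_finset_sum _ fun t _ => ?_
    exact (((continuous_apply t).comp (continuous_apply (A := fun _ : Fin n => Fin (m+1) → ℝ) j')).sub continuous_const).pow 2
  have hmem : {z : Mn n m | 0 < S z} ∈ nhds y := (isOpen_lt continuous_const hScont).mem_nhds hSy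
  have heq : (fun z => Kker H n j (z - x)) =ᶠ[nhds y] (fun z => φ z • ψ z) := by
    refine Filter.eventuallyEq_of_mem hmem fun z hz => ?_
    have hz' : 0 < S z := hz
    have ha : H.conj (embM H ((z - x) j)) = ψ z := by
      simp [embM, Pi.sub_apply, map_sum, LinearMap.map_smul, hψ]
    have hb : enormMn (z - x) = Real.sqrt (S z) := by
      simp [enormMn, Pi.sub_apply, hSdef]
    have hc : (usigma N * enormMn (z - x) ^ N)⁻¹ = φ z := by
      rw [hb]
      have h1 : Real.sqrt (S z) ^ N = S z ^ ((N : ℝ)/2) := by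
        rw [Real.sqrt_eq_rpow, ← Real.rpow_natCast (S z ^ (1/2 : ℝ)) N,
          ← Real.rpow_mul hz'.le]
        congr 1
        ring
      rw [h1, mul_inv, ← Real.rpow_neg hz'.le, hφ]
      congr 1
      rw [hNr]
      ring_nf
    show Kker H n j (z - x) = φ z • ψ z
    rw [Kker, ← hN, hc, ha]
  have hfd : fderiv ℝ (fun z => Kker H n j (z - x)) y = φ y • ψ' + φ'.smulRight (ψ y) := by
    rw [heq.fderiv_eq, hgd.fderiv]
  rw [pd, hfd]
  have he1 : ψ' (Pi.single j (Pi.single s 1)) = H.conj (H.v s) := by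
    rw [hψ']
    simp only [ContinuousLinearMap.sum_apply, ContinuousLinearMap.smulRight_apply]
    have : ∀ t, Ecoord j t (Pi.single j (Pi.single s 1) : Mn n m)
        = (Pi.single s (1:ℝ) : Fin (m+1) → ℝ) t := by
      intro t
      show (Pi.single j (Pi.single s (1:ℝ)) : Mn n m) j t = (Pi.single s (1:ℝ) : Fin (m+1) → ℝ) t
      rw [Pi.single_eq_same]
    simp only [this, Pi.single_apply]
    simp [Finset.sum_ite_eq]
  have he2 : S' (Pi.single j (Pi.single s 1)) = 2 * (y j s - x j s) := by
    rw [hS']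
    simp only [ContinuousLinearMap.sum_apply, ContinuousLinearMap.smul_apply]
    have : ∀ j' t, Ecoord j' t (Pi.single j (Pi.single s 1) : Mn n m)
        = if j' = j ∧ t = s then (1:ℝ) else 0 := by
      intro j' t
      show (Pi.single j (Pi.single s 1) : Mn n m) j' t = _
      rcases eq_or_ne j' j with rfl | hj
      · rw [Pi.single_eq_same, Pi.single_apply]
        simp
      · rw [Pi.single_eq_of_ne hj]
        simp [hj]
    simp only [this]
    rw [Finset.sum_eq_single j]
    · rw [Finset.sum_eq_single s]
      · simp
      · intro t _ hts; simp [hts]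
      · intro h; exact absurd (Finset.mem_univ s) h
    · intro j' _ hj'
      apply Finset.sum_eq_zero
      intro t _
      simp [hj']
    · intro h; exact absurd (Finset.mem_univ j) h
  rw [ContinuousLinearMap.add_apply, ContinuousLinearMap.smul_apply,
    ContinuousLinearMap.smulRight_apply, he1, ContinuousLinearMap.smul_apply, he2]
  have hψy : ψ y = ∑ t, (y j t - x j t) • H.conj (H.v t) := rfl
  rw [hψy]
  have hsy : S y = ∑ j', ∑ t, (y j' t - x j' t)^2 := rfl
  congr 1
  rw [smul_eq_mul, ← hsy]
  ring

end AnaAux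

/-- (Lemma 3.3): for every `x ∈ M^n` and `y ≠ x`,
`∑_j ∂̄_{y_j} K_j(y − x) = 0` (left application) and
`∑_j K_j(y − x) ∂̄_{y_j} = 0` (right application). -/
theorem sum_dbar_Kj_eq_zero (H : HCAlg 𝔸 m)
    (x y : Mn n m) (hyx : y ≠ x) :
    (∑ j, dbar H (fun z => Kker H n j (z - x)) j y) = 0 ∧
    (∑ j, ∑ s, H.mul (pd (fun z => Kker H n j (z - x)) j s y) (H.v s)) = 0 := by
  -- positivity of the squared distance
  have hne : ∃ j t, y j t ≠ x j t := by
    by_contra h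
    push_neg at h
    exact hyx (funext fun j => funext fun t => h j t)
  obtain ⟨j0, t0, hd⟩ := hne
  have hS : 0 < ∑ j', ∑ t, (y j' t - x j' t)^2 := by
    refine Finset.sum_pos' (fun j' _ => Finset.sum_nonneg fun t _ => sq_nonneg _)
      ⟨j0, Finset.mem_univ _, ?_⟩
    refine Finset.sum_pos' (fun t _ => sq_nonneg _) ⟨t0, Finset.mem_univ _, ?_⟩
    have h0 : y j0 t0 - x j0 t0 ≠ 0 := sub_ne_zero.mpr hd
    positivity
  set Nr : ℝ := (((m+1)*n : ℕ) : ℝ) with hNrdef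
  set Sy : ℝ := ∑ j', ∑ t, (y j' t - x j' t)^2 with hSydef
  set C1 : ℝ := (usigma ((m+1)*n))⁻¹ * Sy ^ (-Nr/2) with hC1
  set C2 : ℝ := (usigma ((m+1)*n))⁻¹ * (-Nr) * Sy ^ (-Nr/2 - 1) with hC2
  have hpd : ∀ (j : Fin n) (s : Fin (m+1)),
      pd (fun z => Kker H n j (z - x)) j s y
        = C1 • H.conj (H.v s)
          + (C2 * (y j s - x j s)) • (∑ t, (y j t - x j t) • H.conj (H.v t)) := by
    intro j s
    exact pd_Kker H x y hS j s
  -- scalar cancellation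
  have hscal : ((m+1)*n : ℕ) * C1 + C2 * Sy = 0 := by
    have h1 : Sy ^ (-Nr/2) = Sy ^ (-Nr/2 - 1) * Sy := by
      have := Real.rpow_add_one (ne_of_gt hS) (-Nr/2 - 1)
      have h2 : -Nr/2 - 1 + 1 = -Nr/2 := by ring
      rw [h2] at this
      exact this
    rw [hC1, hC2, h1, ← hNrdef]
    ring
  constructor
  · have keyL : ∀ j : Fin n,
        dbar H (fun z => Kker H n j (z - x)) j y
          = ((((m+1) : ℕ) : ℝ) * C1 + C2 * (∑ t, (y j t - x j t)^2)) • H.one := by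
      intro j
      rw [dbar]
      calc ∑ s, H.mul (H.v s) (pd (fun z => Kker H n j (z - x)) j s y)
          = ∑ s, (C1 • H.mul (H.v s) (H.conj (H.v s))
              + (C2 * (y j s - x j s)) •
                  H.mul (H.v s) (∑ t, (y j t - x j t) • H.conj (H.v t))) := by
            refine Finset.sum_congr rfl fun s _ => ?_
            rw [hpd j s, map_add, LinearMap.map_smul, LinearMap.map_smul]
        _ = (∑ s, C1 • H.mul (H.v s) (H.conj (H.v s)))
              + ∑ s, (C2 * (y j s - x j s)) •
                  H.mul (H.v s) (∑ t, (y j t - x j t) • H.conj (H.v t)) :=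
            Finset.sum_add_distrib
        _ = ((((m+1) : ℕ) : ℝ) * C1) • H.one
              + (C2 * (∑ t, (y j t - x j t)^2)) • H.one := by
            congr 1
            · simp only [aux_mul_v_conj H]
              rw [Finset.sum_const, Finset.card_univ, Fintype.card_fin,
                ← Nat.cast_smul_eq_nsmul ℝ, smul_smul]
            · have step : ∑ s, (C2 * (y j s - x j s)) •
                  H.mul (H.v s) (∑ t, (y j t - x j t) • H.conj (H.v t))
                  = C2 • H.mul (∑ s, (y j s - x j s) • H.v s)
                      (∑ t, (y j t - x j t) • H.conj (H.v t)) := by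
                rw [aux_comb_left H _ _ _, Finset.smul_sum]
                refine Finset.sum_congr rfl fun s _ => ?_
                rw [smul_smul]
              rw [step, aux_normA2 H, smul_smul]
        _ = ((((m+1) : ℕ) : ℝ) * C1 + C2 * (∑ t, (y j t - x j t)^2)) • H.one := by
            rw [add_smul]
    calc ∑ j, dbar H (fun z => Kker H n j (z - x)) j y
        = ∑ j : Fin n, ((((m+1) : ℕ) : ℝ) * C1 + C2 * (∑ t, (y j t - x j t)^2)) • H.one := by
          exact Finset.sum_congr rfl fun j _ => keyL j
      _ = (∑ j : Fin n, ((((m+1) : ℕ) : ℝ) * C1 + C2 * (∑ t, (y j t - x j t)^2))) • H.one := by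
          rw [Finset.sum_smul]
      _ = 0 := by
          rw [Finset.sum_add_distrib, Finset.sum_const, Finset.card_univ, Fintype.card_fin,
            ← Finset.mul_sum, ← hSydef]
          have hcoef : (n : ℕ) • ((((m+1) : ℕ) : ℝ) * C1) + C2 * Sy = 0 := by
            rw [nsmul_eq_mul]
            have : (n : ℝ) * ((((m+1) : ℕ) : ℝ) * C1) = (((m+1)*n : ℕ) : ℝ) * C1 := by
              push_cast; ring
            rw [this]
            exact hscal
          rw [hcoef, zero_smul]
  · have keyR : ∀ j : Fin n,
        (∑ s, H.mul (pd (fun z => Kker H n j (z - x)) j s y) (H.v s))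
          = ((((m+1) : ℕ) : ℝ) * C1 + C2 * (∑ t, (y j t - x j t)^2)) • H.one := by
      intro j
      calc ∑ s, H.mul (pd (fun z => Kker H n j (z - x)) j s y) (H.v s)
          = ∑ s, (C1 • H.mul (H.conj (H.v s)) (H.v s)
              + (C2 * (y j s - x j s)) •
                  H.mul (∑ t, (y j t - x j t) • H.conj (H.v t)) (H.v s)) := by
            refine Finset.sum_congr rfl fun s _ => ?_
            rw [hpd j s, map_add, LinearMap.add_apply, LinearMap.map_smul, LinearMap.smul_apply,
              LinearMap.map_smul, LinearMap.smul_apply]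
        _ = (∑ s, C1 • H.mul (H.conj (H.v s)) (H.v s))
              + ∑ s, (C2 * (y j s - x j s)) •
                  H.mul (∑ t, (y j t - x j t) • H.conj (H.v t)) (H.v s) :=
            Finset.sum_add_distrib
        _ = ((((m+1) : ℕ) : ℝ) * C1) • H.one
              + (C2 * (∑ t, (y j t - x j t)^2)) • H.one := by
            congr 1
            · simp only [aux_mul_conj_v H]
              rw [Finset.sum_const, Finset.card_univ, Fintype.card_fin,
                ← Nat.cast_smul_eq_nsmul ℝ, smul_smul]
            · have step : ∑ s, (C2 * (y j s - x j s)) •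
                  H.mul (∑ t, (y j t - x j t) • H.conj (H.v t)) (H.v s)
                  = C2 • H.mul (∑ t, (y j t - x j t) • H.conj (H.v t))
                      (∑ s, (y j s - x j s) • H.v s) := by
                rw [aux_comb_right (H.mul _) _ _, Finset.smul_sum]
                refine Finset.sum_congr rfl fun s _ => ?_
                rw [smul_smul]
              rw [step, aux_normA2' H, smul_smul]
        _ = ((((m+1) : ℕ) : ℝ) * C1 + C2 * (∑ t, (y j t - x j t)^2)) • H.one := by
            rw [add_smul]
    calc ∑ j, ∑ s, H.mul (pd (fun z => Kker H n j (z - x)) j s y) (H.v s)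
        = ∑ j : Fin n, ((((m+1) : ℕ) : ℝ) * C1 + C2 * (∑ t, (y j t - x j t)^2)) • H.one := by
          exact Finset.sum_congr rfl fun j _ => keyR j
      _ = (∑ j : Fin n, ((((m+1) : ℕ) : ℝ) * C1 + C2 * (∑ t, (y j t - x j t)^2))) • H.one := by
          rw [Finset.sum_smul]
      _ = 0 := by
          rw [Finset.sum_add_distrib, Finset.sum_const, Finset.card_univ, Fintype.card_fin,
            ← Finset.mul_sum, ← hSydef]
          have hcoef : (n : ℕ) • ((((m+1) : ℕ) : ℝ) * C1) + C2 * Sy = 0 := by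
            rw [nsmul_eq_mul]
            have : (n : ℝ) * ((((m+1) : ℕ) : ℝ) * C1) = (((m+1)*n : ℕ) : ℝ) * C1 := by
              push_cast; ring
            rw [this]
            exact hscal
          rw [hcoef, zero_smul]

end
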